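/- Let G be a graph, H an attachment set of odd size h, and q a kernel eigenvector of G. Then q extends to a kernel eigenvector q̃ of altan(G,H) with q̃|_{V(G)} = q, q̃(x_i) = 0 for all i, and q̃(y_h) = (1/2)·Σ_{i=1}^{h} (-1)^i q(v_i). -/

import Mathlib

open scoped Classical

/-- The nullity of a graph: dimension of the kernel of its real adjacency matrix. -/
noncomputable def nullity {V : Type*} [Fintype V] (G : SimpleGraph V) : ℕ :=
  letI := Classical.decEq V
  letI := Classical.decRel G.Adj
  Module.finrank ℝ ↥(LinearMap.ker (Matrix.toLin' (G.adjMatrix ℝ)))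

/-- `q` is a kernel eigenvector of `G`: the sum of `q` over each neighbourhood is `0`. -/
def IsKernelVector {V : Type*} [Fintype V] (G : SimpleGraph V) (q : V → ℝ) : Prop :=
  ∀ v : V, ∑ u : V, (if G.Adj v u then q u else 0) = 0

/-- Underlying relation of the altan construction: vertices are `V ⊕ (Fin h ⊕ Fin h)`,
where `Sum.inr (Sum.inl i)` is `x_{i+1}` and `Sum.inr (Sum.inr i)` is `y_{i+1}`
(0-indexed versions of the 1-indexed `x_i, y_i`). -/
def altanRel {V : Type*} {h : ℕ} [NeZero h] (G : SimpleGraph V) (H : Fin h → V) :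
    (V ⊕ (Fin h ⊕ Fin h)) → (V ⊕ (Fin h ⊕ Fin h)) → Prop
  | Sum.inl u, Sum.inl w => G.Adj u w
  | Sum.inl u, Sum.inr (Sum.inl i) => u = H i
  | Sum.inr (Sum.inl i), Sum.inr (Sum.inr j) => j = i ∨ i = j + 1
  | _, _ => False

/-- The altan of `(G, H)`. -/
def altan {V : Type*} {h : ℕ} [NeZero h] (G : SimpleGraph V) (H : Fin h → V) :
    SimpleGraph (V ⊕ (Fin h ⊕ Fin h)) :=
  SimpleGraph.fromRel (altanRel G H)

/-- The special vector: `s(y_i) = (-1)^i` (1-indexed), `0` elsewhere. -/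
def specialVector (V : Type*) (h : ℕ) : (V ⊕ (Fin h ⊕ Fin h)) → ℝ
  | Sum.inr (Sum.inr j) => (-1 : ℝ) ^ ((j : ℕ) + 1)
  | _ => 0

/-- The induced attachment set `H' = (y_1, ..., y_h)` of the altan. -/
def inducedAttachment (V : Type*) (h : ℕ) : Fin h → (V ⊕ (Fin h ⊕ Fin h)) :=
  fun i => Sum.inr (Sum.inr i)

section Aux

variable {h : ℕ} [NeZero h]

omit [NeZero h] in
lemma fin_sub_val (a b : Fin h) : ((a - b : Fin h) : ℕ) = (h - b.val + a.val) % h := by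
  rw [Fin.sub_def]

lemma fin_one_val (hh : 2 ≤ h) : ((1 : Fin h) : ℕ) = 1 := by
  rw [Fin.val_one']; exact Nat.mod_eq_of_lt hh

lemma fin_sub_one_val (a : Fin h) (ha : a ≠ 0) : ((a - 1 : Fin h) : ℕ) = a.val - 1 := by
  have hlt := a.isLt
  have hpos : 0 < h := Nat.pos_of_ne_zero (NeZero.ne h)
  have ha' : a.val ≠ 0 := fun hz => ha (Fin.ext hz)
  have h2 : 2 ≤ h := by omega
  rw [fin_sub_val, fin_one_val h2]
  have he : h - 1 + a.val = (a.val - 1) + h := by omega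
  rw [he, Nat.add_mod_right, Nat.mod_eq_of_lt (by omega)]

lemma fin_neg_one_val (hh : 2 ≤ h) : ((-1 : Fin h) : ℕ) = h - 1 := by
  rw [show (-1 : Fin h) = 0 - 1 by abel, fin_sub_val, fin_one_val hh]
  have h0 : ((0 : Fin h) : ℕ) = 0 := rfl
  rw [h0, Nat.add_zero]
  exact Nat.mod_eq_of_lt (by omega)

end Aux

theorem stmt10 {V : Type*} [Fintype V] {h : ℕ} [NeZero h] (hh : 2 ≤ h) (hodd : Odd h)
    (G : SimpleGraph V) (H : Fin h → V) (q : V → ℝ)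
    (hq : IsKernelVector G q) :
    ∃ q' : (V ⊕ (Fin h ⊕ Fin h)) → ℝ,
      IsKernelVector (altan G H) q' ∧ (∀ u : V, q' (Sum.inl u) = q u) ∧
        (∀ i : Fin h, q' (Sum.inr (Sum.inl i)) = 0) ∧
        q' (Sum.inr (Sum.inr ⟨h - 1, by omega⟩)) =
          (1 / 2 : ℝ) * ∑ i : Fin h, (-1 : ℝ) ^ ((i : ℕ) + 1) * q (H i) := by
  set a : Fin h → ℝ :=
    fun j => -(1/2 : ℝ) * ∑ m : Fin h, (-1 : ℝ) ^ ((j - m : Fin h) : ℕ) * q (H m) with ha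
  have hone : (1 : Fin h) ≠ 0 := by
    intro e
    have := congrArg Fin.val e
    rw [fin_one_val hh] at this
    simp at this
  -- the key recurrence
  have key : ∀ i : Fin h, a i + a (i - 1) = -q (H i) := by
    intro i
    have hsum : ∑ m : Fin h,
        (((-1 : ℝ) ^ ((i - m : Fin h) : ℕ) + (-1 : ℝ) ^ ((i - 1 - m : Fin h) : ℕ)) * q (H m))
        = 2 * q (H i) := by
      rw [Finset.sum_eq_single i]
      · have h1 : (i - i : Fin h) = 0 := sub_self i
        have h2 : (i - 1 - i : Fin h) = -1 := by abel
        have h3 : ((-1 : Fin h) : ℕ) = h - 1 := fin_neg_one_val hh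
        have h4 : Even (h - 1) := by
          obtain ⟨k, hk⟩ := hodd; exact ⟨k, by omega⟩
        have h0 : ((0 : Fin h) : ℕ) = 0 := rfl
        rw [h1, h2, h3, h0, pow_zero, h4.neg_one_pow]
        ring
      · intro m _ hm
        have hne : (i - m : Fin h) ≠ 0 := by
          rw [sub_ne_zero]; exact fun e => hm e.symm
        have h5 : (i - 1 - m : Fin h) = (i - m) - 1 := by abel
        have h6 : ((i - 1 - m : Fin h) : ℕ) = ((i - m : Fin h) : ℕ) - 1 := by
          rw [h5, fin_sub_one_val _ hne]
        have h7 : 1 ≤ ((i - m : Fin h) : ℕ) := by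
          rcases Nat.eq_zero_or_pos ((i - m : Fin h) : ℕ) with h0 | h0
          · exact absurd (Fin.ext h0) hne
          · omega
        have h8 : (-1 : ℝ) ^ ((i - m : Fin h) : ℕ)
            = -(-1 : ℝ) ^ (((i - m : Fin h) : ℕ) - 1) := by
          conv_lhs => rw [show ((i - m : Fin h) : ℕ) = (((i - m : Fin h) : ℕ) - 1) + 1 from
            by omega]
          rw [pow_succ]; ring
        rw [h6, h8]
        ring
      · intro hi; exact absurd (Finset.mem_univ i) hi
    simp only [ha]
    rw [← mul_add, ← Finset.sum_add_distrib,
      Finset.sum_congr rfl (fun m _ => (add_mul ((-1 : ℝ) ^ ((i - m : Fin h) : ℕ))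
        ((-1 : ℝ) ^ ((i - 1 - m : Fin h) : ℕ)) (q (H m))).symm), hsum]
    ring
  refine ⟨Sum.elim q (Sum.elim (fun _ => 0) a), ?_, fun u => rfl, fun i => rfl, ?_⟩
  · intro v
    rcases v with u | i | j
    · -- original vertex
      rw [Fintype.sum_sum_type, Fintype.sum_sum_type]
      have e1 : ∀ w : V,
          (if (altan G H).Adj (Sum.inl u) (Sum.inl w)
            then Sum.elim q (Sum.elim (fun _ : Fin h => (0:ℝ)) a) (Sum.inl w) else 0)
          = (if G.Adj u w then q w else 0) := by
        intro w
        have hiff : (altan G H).Adj (Sum.inl u) (Sum.inl w) ↔ G.Adj u w := by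
          simp only [altan, SimpleGraph.fromRel_adj]
          constructor
          · rintro ⟨-, hr | hr⟩
            · exact hr
            · exact hr.symm
          · intro hadj
            exact ⟨by simp only [ne_eq, Sum.inl.injEq]; exact hadj.ne, Or.inl hadj⟩
        rw [if_congr hiff rfl rfl]
        rfl
      have e2 : ∀ i : Fin h,
          (if (altan G H).Adj (Sum.inl u) (Sum.inr (Sum.inl i))
            then Sum.elim q (Sum.elim (fun _ : Fin h => (0:ℝ)) a) (Sum.inr (Sum.inl i)) else 0) = 0 := by
        intro i; simp
      have e3 : ∀ j : Fin h,
          (if (altan G H).Adj (Sum.inl u) (Sum.inr (Sum.inr j))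
            then Sum.elim q (Sum.elim (fun _ : Fin h => (0:ℝ)) a) (Sum.inr (Sum.inr j)) else 0) = 0 := by
        intro j
        rw [if_neg]
        simp [altan, SimpleGraph.fromRel_adj, altanRel]
      rw [Finset.sum_congr rfl fun w _ => e1 w, Finset.sum_congr rfl fun i _ => e2 i,
        Finset.sum_congr rfl fun j _ => e3 j]
      simp [hq u]
    · -- x_i vertex
      rw [Fintype.sum_sum_type, Fintype.sum_sum_type]
      have e1 : ∀ w : V,
          (if (altan G H).Adj (Sum.inr (Sum.inl i)) (Sum.inl w)
            then Sum.elim q (Sum.elim (fun _ : Fin h => (0:ℝ)) a) (Sum.inl w) else 0)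
          = (if w = H i then q w else 0) := by
        intro w
        have hiff : (altan G H).Adj (Sum.inr (Sum.inl i)) (Sum.inl w) ↔ w = H i := by
          simp only [altan, SimpleGraph.fromRel_adj]
          constructor
          · rintro ⟨-, hr | hr⟩
            · exact absurd hr (by simp [altanRel])
            · exact hr
          · intro e
            exact ⟨by simp, Or.inr e⟩
        rw [if_congr hiff rfl rfl]
        rfl
      have e2 : ∀ i' : Fin h,
          (if (altan G H).Adj (Sum.inr (Sum.inl i)) (Sum.inr (Sum.inl i'))
            then Sum.elim q (Sum.elim (fun _ : Fin h => (0:ℝ)) a) (Sum.inr (Sum.inl i')) else 0)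
            = 0 := by
        intro i'; simp
      have e3 : ∀ j : Fin h,
          (if (altan G H).Adj (Sum.inr (Sum.inl i)) (Sum.inr (Sum.inr j))
            then Sum.elim q (Sum.elim (fun _ : Fin h => (0:ℝ)) a) (Sum.inr (Sum.inr j)) else 0)
          = (if j = i then a j else 0) + (if j = i - 1 then a j else 0) := by
        intro j
        have hiff : (altan G H).Adj (Sum.inr (Sum.inl i)) (Sum.inr (Sum.inr j))
            ↔ (j = i ∨ i = j + 1) := by
          simp only [altan, SimpleGraph.fromRel_adj]
          constructor
          · rintro ⟨-, hr | hr⟩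
            · exact hr
            · exact absurd hr (by simp [altanRel])
          · intro hc
            exact ⟨by simp, Or.inl hc⟩
        rw [if_congr hiff rfl rfl]
        by_cases h1 : j = i
        · have h2 : ¬ (j = i - 1) := by
            intro h2
            rw [h1] at h2
            exact hone (left_eq_add.mp (sub_eq_iff_eq_add.mp h2.symm))
          rw [if_pos (Or.inl h1), if_pos h1, if_neg h2, add_zero]
          rfl
        · by_cases h3 : i = j + 1
          · have h4 : j = i - 1 := by rw [h3]; abel
            rw [if_pos (Or.inr h3), if_neg h1, if_pos h4, zero_add]
            rfl
          · rw [if_neg (by tauto), if_neg h1,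
              if_neg (fun h4 => h3 (by rw [h4]; abel)), add_zero]
      rw [Finset.sum_congr rfl fun w _ => e1 w, Finset.sum_congr rfl fun i' _ => e2 i',
        Finset.sum_congr rfl fun j _ => e3 j, Finset.sum_add_distrib]
      have ka := key i
      simp only [Finset.sum_ite_eq', Finset.mem_univ, if_true, Finset.sum_const_zero,
        add_zero, Finset.sum_ite_eq]
      linarith [key i]
    · -- y_j vertex
      rw [Fintype.sum_sum_type, Fintype.sum_sum_type]
      have e1 : ∀ w : V,
          (if (altan G H).Adj (Sum.inr (Sum.inr j)) (Sum.inl w)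
            then Sum.elim q (Sum.elim (fun _ : Fin h => (0:ℝ)) a) (Sum.inl w) else 0) = 0 := by
        intro w
        rw [if_neg]
        simp [altan, SimpleGraph.fromRel_adj, altanRel]
      have e2 : ∀ i : Fin h,
          (if (altan G H).Adj (Sum.inr (Sum.inr j)) (Sum.inr (Sum.inl i))
            then Sum.elim q (Sum.elim (fun _ : Fin h => (0:ℝ)) a) (Sum.inr (Sum.inl i)) else 0)
            = 0 := by
        intro i; simp
      have e3 : ∀ j' : Fin h,
          (if (altan G H).Adj (Sum.inr (Sum.inr j)) (Sum.inr (Sum.inr j'))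
            then Sum.elim q (Sum.elim (fun _ : Fin h => (0:ℝ)) a) (Sum.inr (Sum.inr j')) else 0)
            = 0 := by
        intro j'
        rw [if_neg]
        simp [altan, SimpleGraph.fromRel_adj, altanRel]
      rw [Finset.sum_congr rfl fun w _ => e1 w, Finset.sum_congr rfl fun i _ => e2 i,
        Finset.sum_congr rfl fun j' _ => e3 j']
      simp
  · -- the value at y_{h-1}
    have hlast : (⟨h - 1, by omega⟩ : Fin h) = -1 := by
      apply Fin.ext
      rw [fin_neg_one_val hh]
    have hval : ∀ m : Fin h, ((-1 - m : Fin h) : ℕ) = h - 1 - m.val := by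
      intro m
      rw [show (-1 - m : Fin h) = 0 - (m + 1) by abel, fin_sub_val]
      have hm1 : ((m + 1 : Fin h) : ℕ) = (m.val + 1) % h := by
        rw [Fin.add_def, fin_one_val hh]
      have h0 : ((0 : Fin h) : ℕ) = 0 := rfl
      rw [hm1, h0, Nat.add_zero]
      have := m.isLt
      rcases Nat.lt_or_ge (m.val + 1) h with hl | hl
      · rw [Nat.mod_eq_of_lt hl, Nat.mod_eq_of_lt (by omega)]
        omega
      · have he : m.val + 1 = h := by omega
        rw [he, Nat.mod_self, Nat.sub_zero, Nat.mod_self]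
        omega
    have hsign : ∀ m : Fin h, (-1 : ℝ) ^ ((-1 - m : Fin h) : ℕ) = (-1 : ℝ) ^ (m.val) := by
      intro m
      rw [hval m]
      have hmlt := m.isLt
      have heven : Even (h - 1) := by obtain ⟨k, hk⟩ := hodd; exact ⟨k, by omega⟩
      have hsplit : (h - 1 - m.val) + m.val = h - 1 := by omega
      have hp := pow_add (-1 : ℝ) (h - 1 - m.val) m.val
      rw [hsplit, heven.neg_one_pow] at hp
      have hm2 : (-1 : ℝ) ^ m.val * (-1 : ℝ) ^ m.val = 1 := by
        rw [← pow_add]; exact (Even.neg_one_pow ⟨m.val, rfl⟩)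
      calc (-1 : ℝ) ^ (h - 1 - m.val)
          = (-1 : ℝ) ^ (h - 1 - m.val) * ((-1 : ℝ) ^ m.val * (-1 : ℝ) ^ m.val) := by
            rw [hm2, mul_one]
        _ = ((-1 : ℝ) ^ (h - 1 - m.val) * (-1 : ℝ) ^ m.val) * (-1 : ℝ) ^ m.val := by ring
        _ = (-1 : ℝ) ^ m.val := by rw [← hp, one_mul]
    show a _ = _
    rw [hlast]
    simp only [ha]
    rw [Finset.sum_congr rfl fun m _ => by rw [hsign m]]
    rw [Finset.mul_sum, Finset.mul_sum]
    apply Finset.sum_congr rfl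
    intro m _
    rw [pow_succ]
    ring
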